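/- Fix an integer d ≥ 1 and let β > 1/2. There exists a constant C > 0 depending only on β such that: if A, B : E × E → ℂ are infinite matrices with |A|_{β+} < ∞ and |B|_{β+} < ∞, then the product AB, defined by (AB)_a^c = Σ_{b∈E} A_a^b B_b^c (this series converges absolutely), satisfies |AB|_{β+} ≤ C·|A|_{β+}·|B|_{β+}. -/

import Mathlib

open scoped Classical

/-- `hermiteDim d j` is the number of `d`-tuples of odd natural numbers summing to `j`,
i.e. the multiplicity `d_j` of the eigenvalue `j` of the `d`-dimensional harmonic oscillator. -/
noncomputable def hermiteDim (d j : ℕ) : ℕ :=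
  ((Finset.univ : Finset (Fin d → Fin (j + 1))).filter
    (fun f => (∀ i, Odd ((f i : ℕ))) ∧ ∑ i, ((f i : ℕ)) = j)).card

/-- The index set `E = {(j, l) : j ∈ Ê, 1 ≤ l ≤ d_j}`, encoded as pairs `⟨k, l⟩` where
`j = d + 2k` runs over `Ê = {d, d+2, …}` and `l` runs over a set of cardinality `d_j`. -/
abbrev IndexE (d : ℕ) : Type := Σ k : ℕ, Fin (hermiteDim d (d + 2 * k))

/-- The eigenvalue `w_a` attached to `a ∈ E`. -/
def wE (d : ℕ) (a : IndexE d) : ℕ := d + 2 * a.1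

/-- The operator norm of the block `A_{[j]}^{[j']}`, `j = d + 2k`, `j' = d + 2k'`, of an
infinite matrix `A : E × E → ℂ`, as a linear map between the corresponding Euclidean spaces. -/
noncomputable def blockNorm (d : ℕ) (A : IndexE d → IndexE d → ℂ) (k k' : ℕ) : ℝ :=
  ‖LinearMap.toContinuousLinearMap (Matrix.toEuclideanLin
      (Matrix.of fun (i : Fin (hermiteDim d (d + 2 * k)))
        (i' : Fin (hermiteDim d (d + 2 * k'))) => A ⟨k, i⟩ ⟨k', i'⟩))‖

/-- The weight `(1 + ln j)^β (1 + ln j')^β` with `j = d + 2k`, `j' = d + 2k'`. -/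
noncomputable def wtBeta (d : ℕ) (β : ℝ) (k k' : ℕ) : ℝ :=
  (1 + Real.log ((d : ℝ) + 2 * k)) ^ β * (1 + Real.log ((d : ℝ) + 2 * k')) ^ β

/-- The weight `(1 + |j - j'|)(1 + ln j)^β (1 + ln j')^β` with `j = d + 2k`, `j' = d + 2k'`. -/
noncomputable def wtBetaPlus (d : ℕ) (β : ℝ) (k k' : ℕ) : ℝ :=
  (1 + |((d : ℝ) + 2 * k) - ((d : ℝ) + 2 * k')|) * wtBeta d β k k'

open Matrix
open scoped Matrix.Norms.L2Operator

namespace Stmt6Aux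


noncomputable def haux (p : ℝ) (n : ℕ) : ℝ :=
  ((1 + (n : ℝ)) * (1 + Real.log (1 + (n : ℝ))) ^ p)⁻¹

lemma onelog_pos {x : ℝ} (hx : 1 ≤ x) : (0:ℝ) < 1 + Real.log x := by
  have := Real.log_nonneg hx; linarith

lemma haux_pos (p : ℝ) (n : ℕ) : 0 < haux p n := by
  have h1 : (0:ℝ) < 1 + (n:ℝ) := by positivity
  have h2 : (0:ℝ) < 1 + Real.log (1 + (n:ℝ)) :=
    onelog_pos (by simp)
  have := Real.rpow_pos_of_pos h2 p
  unfold haux; positivity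

lemma haux_le_haux (p : ℝ) (hp : 0 ≤ p) {m n : ℕ} (h : m ≤ n) : haux p n ≤ haux p m := by
  have h1 : (0:ℝ) < 1 + (m:ℝ) := by positivity
  have h2 : (0:ℝ) < 1 + Real.log (1 + (m:ℝ)) := onelog_pos (by simp)
  have hc : (m:ℝ) ≤ (n:ℝ) := Nat.cast_le.2 h
  have hlog : Real.log (1 + (m:ℝ)) ≤ Real.log (1 + (n:ℝ)) :=
    Real.log_le_log h1 (by linarith)
  apply inv_anti₀
  · positivity
  · apply mul_le_mul (by linarith)
      (Real.rpow_le_rpow h2.le (by linarith) hp)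
      (Real.rpow_pos_of_pos h2 p).le (by linarith)

lemma haux_summable {p : ℝ} (hp : 1 < p) : Summable (haux p) := by
  have hp0 : 0 ≤ p := by linarith
  rw [← summable_condensed_iff_of_nonneg (fun n => (haux_pos p n).le)
      (fun m n _ hmn => haux_le_haux p hp0 hmn)]
  have hs : Summable (fun n : ℕ => (2:ℝ) ^ p * ((1 + (n:ℝ)) ^ p)⁻¹) := by
    have h0 : Summable (fun n : ℕ => ((n:ℝ)) ^ (-p)) :=
      Real.summable_nat_rpow.2 (by linarith)
    have h1 : Summable (fun n : ℕ => (((n+1 : ℕ)):ℝ) ^ (-p)) :=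
      (summable_nat_add_iff 1).2 h0
    have h2 : Summable (fun n : ℕ => ((1 + (n:ℝ))) ^ (-p)) := by
      refine h1.congr fun n => ?_
      push_cast; ring_nf
    refine (h2.mul_left ((2:ℝ)^p)).congr fun n => ?_
    rw [Real.rpow_neg (by positivity : (0:ℝ) ≤ 1 + (n:ℝ))]
  refine Summable.of_nonneg_of_le (fun n => ?_) (fun n => ?_) hs
  · have := (haux_pos p (2^n)).le; positivity
  · -- 2^n * haux p (2^n) ≤ 2^p * ((1+n)^p)⁻¹
    have hlog2 : (1:ℝ)/2 ≤ Real.log 2 := by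
      have := Real.log_two_gt_d9; linarith
    have hcast : ((2^n : ℕ) : ℝ) = (2:ℝ)^n := by push_cast; ring
    have hbase : (1 + (n:ℝ))/2 ≤ 1 + Real.log (1 + ((2^n : ℕ):ℝ)) := by
      have h1 : ((2:ℝ)^n) ≤ 1 + ((2^n : ℕ):ℝ) := by rw [hcast]; linarith
      have h2 : Real.log ((2:ℝ)^n) ≤ Real.log (1 + ((2^n:ℕ):ℝ)) :=
        Real.log_le_log (by positivity) h1
      rw [Real.log_pow] at h2
      have h3 : (n:ℝ) * (1/2) ≤ (n:ℝ) * Real.log 2 :=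
        mul_le_mul_of_nonneg_left hlog2 (Nat.cast_nonneg n)
      linarith
    have hbase0 : (0:ℝ) ≤ (1 + (n:ℝ))/2 := by positivity
    have hrp : ((1 + (n:ℝ))/2) ^ p ≤ (1 + Real.log (1 + ((2^n : ℕ):ℝ))) ^ p :=
      Real.rpow_le_rpow hbase0 hbase hp0
    have hprod : (2:ℝ)^n * (((1 + (n:ℝ))/2) ^ p) ≤
        (1 + ((2^n : ℕ):ℝ)) * (1 + Real.log (1 + ((2^n : ℕ):ℝ))) ^ p := by
      apply mul_le_mul
      · rw [hcast]; linarith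
      · exact hrp
      · positivity
      · positivity
    have hpos1 : (0:ℝ) < (2:ℝ)^n * (((1 + (n:ℝ))/2) ^ p) := by positivity
    have hinv : haux p (2^n) ≤ ((2:ℝ)^n * (((1 + (n:ℝ))/2) ^ p))⁻¹ := by
      unfold haux
      exact inv_anti₀ hpos1 hprod
    have h2 : (2:ℝ)^n * haux p (2^n) ≤ (2:ℝ)^n * ((2:ℝ)^n * (((1 + (n:ℝ))/2) ^ p))⁻¹ :=
      mul_le_mul_of_nonneg_left hinv (by positivity)
    refine h2.trans (le_of_eq ?_)
    rw [Real.div_rpow (by positivity) (by norm_num)]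
    field_simp

lemma haux_zero (p : ℝ) : haux p 0 = 1 := by
  simp [haux]

lemma one_le_tsum_haux {p : ℝ} (hp : 1 < p) : 1 ≤ ∑' n, haux p n := by
  have := Summable.le_tsum (haux_summable hp) 0 (fun j _ => (haux_pos p j).le)
  rwa [haux_zero] at this

lemma summable_haux_dist {p : ℝ} (hp : 1 < p) (m : ℕ) :
    Summable (fun n => haux p (Nat.dist n m)) := by
  refine (summable_nat_add_iff m).1 ?_
  refine (haux_summable hp).congr fun n => ?_
  congr 1
  have : Nat.dist (n + m) m = n := by unfold Nat.dist; omega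
  rw [this]

lemma tsum_haux_dist_le {p : ℝ} (hp : 1 < p) (m : ℕ) :
    ∑' n, haux p (Nat.dist n m) ≤ 2 * ∑' n, haux p n := by
  have hs := summable_haux_dist hp m
  have hH := haux_summable hp
  rw [← Summable.sum_add_tsum_nat_add (m+1) hs]
  have h1 : ∑ i ∈ Finset.range (m+1), haux p (Nat.dist i m) ≤ ∑' n, haux p n := by
    have he : ∑ i ∈ Finset.range (m+1), haux p (Nat.dist i m)
        = ∑ i ∈ Finset.range (m+1), haux p i := by
      rw [← Finset.sum_range_reflect (fun i => haux p i) (m+1)]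
      refine Finset.sum_congr rfl fun i hi => ?_
      have hi' : i < m + 1 := Finset.mem_range.1 hi
      congr 1
      unfold Nat.dist; omega
    rw [he]
    exact Summable.sum_le_tsum _ (fun j _ => (haux_pos p j).le) hH
  have h2 : ∑' n, haux p (Nat.dist (n + (m+1)) m) ≤ ∑' n, haux p n := by
    have he : (fun n => haux p (Nat.dist (n + (m+1)) m)) = fun n => haux p (n+1) := by
      funext n; congr 1; unfold Nat.dist; omega
    rw [he]
    have := (Summable.sum_add_tsum_nat_add 1 hH)
    have h0 : 0 ≤ ∑ i ∈ Finset.range 1, haux p i := by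
      simp [haux_zero]
    linarith
  linarith



lemma wt_plus_eq (d : ℕ) (β : ℝ) (k k' : ℕ) :
    wtBetaPlus d β k k' = (1 + 2*((Nat.dist k k' : ℕ) : ℝ)) *
      ((1 + Real.log ((d:ℝ)+2*k)) ^ β * (1 + Real.log ((d:ℝ)+2*k')) ^ β) := by
  unfold wtBetaPlus wtBeta
  congr 1
  have h2 : ((d:ℝ)+2*k) - ((d:ℝ)+2*k') = 2*((k:ℝ) - (k':ℝ)) := by ring
  have habs : |(k:ℝ) - (k':ℝ)| = ((Nat.dist k k' : ℕ) : ℝ) := by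
    rcases le_total k k' with h | h
    · rw [Nat.dist_eq_sub_of_le h, Nat.cast_sub h,
        abs_of_nonpos (by simp only [sub_nonpos]; exact_mod_cast h)]
      ring
    · rw [Nat.dist_eq_sub_of_le_right h, Nat.cast_sub h,
        abs_of_nonneg (by simp only [sub_nonneg]; exact_mod_cast h)]
  rw [h2, abs_mul, abs_two, habs]

lemma logf_ge_one {d : ℕ} (hd : 1 ≤ d) (k : ℕ) : 1 ≤ 1 + Real.log ((d:ℝ)+2*k) := by
  have h1 : (1:ℝ) ≤ (d:ℝ) := by exact_mod_cast hd
  have h2 : (1:ℝ) ≤ (d:ℝ)+2*k := by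
    have : (0:ℝ) ≤ (k:ℝ) := Nat.cast_nonneg _
    linarith
  have := Real.log_nonneg h2
  linarith

lemma wt_one_le {d : ℕ} (hd : 1 ≤ d) {β : ℝ} (hβ0 : 0 ≤ β) (k k' : ℕ) :
    1 ≤ wtBetaPlus d β k k' := by
  rw [wt_plus_eq]
  have h1 : (1:ℝ) ≤ 1 + 2*((Nat.dist k k' : ℕ) : ℝ) := by
    have : (0:ℝ) ≤ ((Nat.dist k k' : ℕ) : ℝ) := Nat.cast_nonneg _
    linarith
  have h2 : (1:ℝ) ≤ (1 + Real.log ((d:ℝ)+2*k)) ^ β :=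
    Real.one_le_rpow (logf_ge_one hd k) hβ0
  have h3 : (1:ℝ) ≤ (1 + Real.log ((d:ℝ)+2*k')) ^ β :=
    Real.one_le_rpow (logf_ge_one hd k') hβ0
  nlinarith [h1, h2, h3, mul_le_mul h2 h3 zero_le_one (by linarith : (0:ℝ) ≤ (1 + Real.log ((d:ℝ)+2*k)) ^ β)]

lemma one_le_weight_mul {d : ℕ} (hd : 1 ≤ d) {β : ℝ} (hβ0 : 0 ≤ β) (t k'' : ℕ) :
    1 ≤ (haux (2*β) t + haux (2*β) k'') *
      ((1 + 2*(t:ℝ)) *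
        ((1 + Real.log ((d:ℝ)+2*k'')) ^ β * (1 + Real.log ((d:ℝ)+2*k'')) ^ β)) := by
  have hd1 : (1:ℝ) ≤ (d:ℝ) := by exact_mod_cast hd
  have hk0 : (0:ℝ) ≤ (k'':ℝ) := Nat.cast_nonneg _
  have ht0 : (0:ℝ) ≤ (t:ℝ) := Nat.cast_nonneg _
  set L : ℝ := 1 + Real.log ((d:ℝ)+2*k'') with hLdef
  have hL1 : 1 ≤ L := logf_ge_one hd k''
  have hLpow : L ^ β * L ^ β = L ^ (2*β) := by
    rw [← Real.rpow_add (by linarith)]; ring_nf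
  rw [hLpow]
  have hXpos : 0 < (1 + 2*(t:ℝ)) * L ^ (2*β) := by
    have := Real.rpow_pos_of_pos (show (0:ℝ) < L by linarith) (2*β)
    positivity
  have hgen : ∀ s : ℕ, s ≤ k'' → (s:ℝ) ≤ 2*(t:ℝ) →
      1 ≤ haux (2*β) s * ((1 + 2*(t:ℝ)) * L ^ (2*β)) := by
    intro s hs hst
    have hs0 : (0:ℝ) ≤ (s:ℝ) := Nat.cast_nonneg _
    have hsl : (0:ℝ) < 1 + Real.log (1 + (s:ℝ)) := onelog_pos (by simp)
    have hlogs : 1 + Real.log (1 + (s:ℝ)) ≤ L := by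
      have hle : (1:ℝ) + (s:ℝ) ≤ (d:ℝ) + 2*k'' := by
        have : (s:ℝ) ≤ (k'':ℝ) := Nat.cast_le.2 hs
        linarith
      have := Real.log_le_log (by positivity) hle
      rw [hLdef]; linarith
    have hmain : (1 + (s:ℝ)) * (1 + Real.log (1 + (s:ℝ)))^(2*β) ≤
        (1 + 2*(t:ℝ)) * L ^ (2*β) := by
      apply mul_le_mul (by linarith)
        (Real.rpow_le_rpow hsl.le hlogs (by linarith)) (by positivity) (by linarith)
    have hpos : (0:ℝ) < (1 + (s:ℝ)) * (1 + Real.log (1 + (s:ℝ)))^(2*β) := by positivity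
    calc (1:ℝ) = ((1 + (s:ℝ)) * (1 + Real.log (1 + (s:ℝ)))^(2*β))⁻¹ *
          ((1 + (s:ℝ)) * (1 + Real.log (1 + (s:ℝ)))^(2*β)) := (inv_mul_cancel₀ hpos.ne').symm
      _ ≤ haux (2*β) s * ((1 + 2*(t:ℝ)) * L ^ (2*β)) := by
          unfold haux
          exact mul_le_mul_of_nonneg_left hmain (inv_nonneg.2 hpos.le)
  have hexp : (haux (2*β) t + haux (2*β) k'') * ((1 + 2*(t:ℝ)) * L ^ (2*β))
      = haux (2*β) t * ((1 + 2*(t:ℝ)) * L ^ (2*β))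
        + haux (2*β) k'' * ((1 + 2*(t:ℝ)) * L ^ (2*β)) := by ring
  rcases le_or_gt t k'' with h | h
  · have h1 := hgen t h (by linarith)
    have h2 : 0 ≤ haux (2*β) k'' * ((1 + 2*(t:ℝ)) * L ^ (2*β)) :=
      mul_nonneg (haux_pos _ _).le hXpos.le
    rw [hexp]; linarith
  · have hk2t : (k'':ℝ) ≤ 2*(t:ℝ) := by
      have : (k'':ℝ) ≤ (t:ℝ) := Nat.cast_le.2 h.le
      linarith
    have h1 := hgen k'' le_rfl hk2t
    have h2 : 0 ≤ haux (2*β) t * ((1 + 2*(t:ℝ)) * L ^ (2*β)) :=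
      mul_nonneg (haux_pos _ _).le hXpos.le
    rw [hexp]; linarith

lemma wt_ratio {d : ℕ} (hd : 1 ≤ d) {β : ℝ} (hβ0 : 0 ≤ β) (k k' k'' : ℕ) :
    wtBetaPlus d β k k' ≤
      ((haux (2*β) (Nat.dist k'' k) + haux (2*β) k'')
        + (haux (2*β) (Nat.dist k'' k') + haux (2*β) k''))
        * (wtBetaPlus d β k k'' * wtBetaPlus d β k'' k') := by
  rw [wt_plus_eq d β k k', wt_plus_eq d β k k'', wt_plus_eq d β k'' k']
  rw [Nat.dist_comm k k'']
  set x : ℝ := (1 + Real.log ((d:ℝ)+2*k)) ^ β with hx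
  set y : ℝ := (1 + Real.log ((d:ℝ)+2*k')) ^ β with hy
  set z : ℝ := (1 + Real.log ((d:ℝ)+2*k'')) ^ β with hz
  have hx0 : 0 < x := Real.rpow_pos_of_pos (by linarith [logf_ge_one (d := d) hd k]) β
  have hy0 : 0 < y := Real.rpow_pos_of_pos (by linarith [logf_ge_one (d := d) hd k']) β
  have hz0 : 0 < z := Real.rpow_pos_of_pos (by linarith [logf_ge_one (d := d) hd k'']) β
  set P : ℝ := haux (2*β) (Nat.dist k'' k) + haux (2*β) k'' with hP
  set Q : ℝ := haux (2*β) (Nat.dist k'' k') + haux (2*β) k'' with hQ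
  set a : ℝ := 1 + 2*((Nat.dist k'' k : ℕ) : ℝ) with ha
  set b : ℝ := 1 + 2*((Nat.dist k'' k' : ℕ) : ℝ) with hb
  set c : ℝ := 1 + 2*((Nat.dist k k' : ℕ) : ℝ) with hc
  have hP0 : 0 ≤ P := by
    have := haux_pos (2*β) (Nat.dist k'' k); have := haux_pos (2*β) k''; rw [hP]; linarith
  have hQ0 : 0 ≤ Q := by
    have := haux_pos (2*β) (Nat.dist k'' k'); have := haux_pos (2*β) k''; rw [hQ]; linarith
  have ha1 : 1 ≤ a := by
    have : (0:ℝ) ≤ ((Nat.dist k'' k : ℕ) : ℝ) := Nat.cast_nonneg _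
    rw [ha]; linarith
  have hb1 : 1 ≤ b := by
    have : (0:ℝ) ≤ ((Nat.dist k'' k' : ℕ) : ℝ) := Nat.cast_nonneg _
    rw [hb]; linarith
  have h1 : 1 ≤ P * (a * (z*z)) := one_le_weight_mul hd hβ0 (Nat.dist k'' k) k''
  have h2 : 1 ≤ Q * (b * (z*z)) := one_le_weight_mul hd hβ0 (Nat.dist k'' k') k''
  have htri : c ≤ a + b := by
    have h := Nat.dist.triangle_inequality k k'' k'
    rw [Nat.dist_comm k k''] at h
    have hcast : ((Nat.dist k k' : ℕ) : ℝ) ≤ ((Nat.dist k'' k : ℕ) : ℝ)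
        + ((Nat.dist k'' k' : ℕ) : ℝ) := by exact_mod_cast h
    rw [ha, hb, hc]; linarith
  have hAB : c ≤ (P + Q) * (a * b * (z*z)) := by
    have e1 : b * 1 ≤ b * (P * (a * (z*z))) :=
      mul_le_mul_of_nonneg_left h1 (by linarith)
    have e2 : a * 1 ≤ a * (Q * (b * (z*z))) :=
      mul_le_mul_of_nonneg_left h2 (by linarith)
    nlinarith [e1, e2, htri]
  calc c * (x*y) ≤ ((P + Q) * (a * b * (z*z))) * (x*y) :=
        mul_le_mul_of_nonneg_right hAB (by positivity)
    _ = (P + Q) * ((a * (x*z)) * (b * (z*y))) := by ring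



lemma coord_le_norm {m : ℕ} (y : EuclideanSpace ℂ (Fin m)) (r : Fin m) :
    ‖y r‖ ≤ ‖y‖ := by
  rw [EuclideanSpace.norm_eq]
  have h1 : ‖y r‖ ^ 2 ≤ ∑ t, ‖y t‖ ^ 2 :=
    Finset.single_le_sum (f := fun t => ‖y t‖ ^ 2) (fun t _ => by positivity)
      (Finset.mem_univ r)
  calc ‖y r‖ = Real.sqrt (‖y r‖ ^ 2) := (Real.sqrt_sq (norm_nonneg _)).symm
    _ ≤ _ := Real.sqrt_le_sqrt h1

lemma rowSq {m n : ℕ} (M : Matrix (Fin m) (Fin n) ℂ) (r : Fin m) :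
    ∑ t, ‖M r t‖ ^ 2 ≤ ‖M‖ ^ 2 := by
  set S : ℝ := ∑ t, ‖M r t‖ ^ 2 with hS
  have hS0 : 0 ≤ S := Finset.sum_nonneg fun t _ => by positivity
  set v : EuclideanSpace ℂ (Fin n) :=
    (WithLp.equiv 2 (Fin n → ℂ)).symm (fun t => (starRingEnd ℂ) (M r t)) with hv
  have hvnorm : ‖v‖ = Real.sqrt S := by
    rw [EuclideanSpace.norm_eq, hS]
    congr 1
    refine Finset.sum_congr rfl fun t _ => ?_
    rw [hv, WithLp.equiv_symm_apply, PiLp.toLp_apply]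
    simp
  have happ : ((EuclideanSpace.equiv (Fin m) ℂ).symm (M *ᵥ v)) r = (S : ℂ) := by
    show (M *ᵥ v) r = (S : ℂ)
    rw [Matrix.mulVec, dotProduct]
    rw [hS]
    push_cast
    refine Finset.sum_congr rfl fun t _ => ?_
    rw [hv, WithLp.equiv_symm_apply, PiLp.toLp_apply, Complex.mul_conj']
  have hle := Matrix.l2_opNorm_mulVec M v
  have hco := coord_le_norm ((EuclideanSpace.equiv (Fin m) ℂ).symm (M *ᵥ v)) r
  rw [happ] at hco
  have hSnorm : ‖(S : ℂ)‖ = S := by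
    rw [Complex.norm_real, Real.norm_of_nonneg hS0]
  have key : S ≤ ‖M‖ * Real.sqrt S := by
    calc S = ‖(S:ℂ)‖ := hSnorm.symm
      _ ≤ ‖(EuclideanSpace.equiv (Fin m) ℂ).symm (M *ᵥ v)‖ := hco
      _ ≤ ‖M‖ * ‖v‖ := hle
      _ = ‖M‖ * Real.sqrt S := by rw [hvnorm]
  rcases eq_or_lt_of_le hS0 with h | h
  · rw [← h]; positivity
  · have hM0 : (0:ℝ) ≤ ‖M‖ := norm_nonneg _
    have hsq : Real.sqrt S ^ 2 = S := Real.sq_sqrt hS0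
    have hs : 0 < Real.sqrt S := Real.sqrt_pos.2 h
    have h2 : Real.sqrt S ≤ ‖M‖ := by nlinarith [key, hsq, hs]
    nlinarith [h2, hs, hsq]

lemma colSq {m n : ℕ} (M : Matrix (Fin m) (Fin n) ℂ) (s : Fin n) :
    ∑ t, ‖M t s‖ ^ 2 ≤ ‖M‖ ^ 2 := by
  have h := rowSq (Mᴴ) s
  rw [Matrix.l2_opNorm_conjTranspose] at h
  refine le_trans (le_of_eq ?_) h
  refine Finset.sum_congr rfl fun t _ => ?_
  rw [Matrix.conjTranspose_apply]
  simp

lemma rowcol {m n l : ℕ} (M : Matrix (Fin m) (Fin n) ℂ) (N : Matrix (Fin n) (Fin l) ℂ)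
    (r : Fin m) (s : Fin l) :
    ∑ t, ‖M r t‖ * ‖N t s‖ ≤ ‖M‖ * ‖N‖ := by
  have hCS := Finset.sum_mul_sq_le_sq_mul_sq Finset.univ (fun t => ‖M r t‖) (fun t => ‖N t s‖)
  have h1 := rowSq M r
  have h2 := colSq N s
  have hs1 : (0:ℝ) ≤ ∑ t, ‖M r t‖ ^ 2 := Finset.sum_nonneg fun t _ => by positivity
  have h3 : (∑ t, ‖M r t‖ * ‖N t s‖) ^ 2 ≤ (‖M‖ * ‖N‖) ^ 2 := by
    calc (∑ t, ‖M r t‖ * ‖N t s‖) ^ 2 ≤ (∑ t, ‖M r t‖ ^ 2) * (∑ t, ‖N t s‖ ^ 2) := hCS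
      _ ≤ ‖M‖ ^ 2 * ‖N‖ ^ 2 := by
          apply mul_le_mul h1 h2 (Finset.sum_nonneg fun t _ => by positivity) (by positivity)
      _ = (‖M‖ * ‖N‖) ^ 2 := by ring
  have hs0 : (0:ℝ) ≤ ∑ t, ‖M r t‖ * ‖N t s‖ :=
    Finset.sum_nonneg fun t _ => mul_nonneg (norm_nonneg _) (norm_nonneg _)
  have hmn : (0:ℝ) ≤ ‖M‖ * ‖N‖ := mul_nonneg (norm_nonneg _) (norm_nonneg _)
  nlinarith [h3, hs0, hmn]



lemma blockNorm_eq_l2 (d : ℕ) (A : IndexE d → IndexE d → ℂ) (k k' : ℕ) :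
    blockNorm d A k k' =
      ‖(Matrix.of fun (i : Fin (hermiteDim d (d + 2 * k)))
        (i' : Fin (hermiteDim d (d + 2 * k'))) => A ⟨k, i⟩ ⟨k', i'⟩)‖ := rfl

lemma fiber_sum_le (d : ℕ) (A B : IndexE d → IndexE d → ℂ) (k k' k'' : ℕ)
    (i : Fin (hermiteDim d (d + 2 * k))) (i' : Fin (hermiteDim d (d + 2 * k'))) :
    ∑ i'' : Fin (hermiteDim d (d + 2 * k'')), ‖A ⟨k, i⟩ ⟨k'', i''⟩ * B ⟨k'', i''⟩ ⟨k', i'⟩‖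
      ≤ blockNorm d A k k'' * blockNorm d B k'' k' := by
  rw [blockNorm_eq_l2, blockNorm_eq_l2]
  have h := rowcol (Matrix.of fun (a : Fin (hermiteDim d (d + 2 * k)))
      (b : Fin (hermiteDim d (d + 2 * k''))) => A ⟨k, a⟩ ⟨k'', b⟩)
    (Matrix.of fun (a : Fin (hermiteDim d (d + 2 * k'')))
      (b : Fin (hermiteDim d (d + 2 * k'))) => B ⟨k'', a⟩ ⟨k', b⟩) i i'
  refine le_trans (le_of_eq ?_) h
  exact Finset.sum_congr rfl fun t _ => norm_mul _ _

lemma block_prod_le (d : ℕ) (A B : IndexE d → IndexE d → ℂ) (k k' : ℕ)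
    (hsum : ∀ a c : IndexE d, Summable (fun b : IndexE d => ‖A a b * B b c‖))
    (hF : Summable (fun k'' => blockNorm d A k k'' * blockNorm d B k'' k')) :
    blockNorm d (fun a c => ∑' b : IndexE d, A a b * B b c) k k' ≤
      ∑' k'', blockNorm d A k k'' * blockNorm d B k'' k' := by
  set Amat : ∀ k1 k2 : ℕ, Matrix (Fin (hermiteDim d (d + 2*k1))) (Fin (hermiteDim d (d + 2*k2))) ℂ :=
    fun k1 k2 => Matrix.of fun i i' => A ⟨k1, i⟩ ⟨k2, i'⟩ with hAmat
  set Bmat : ∀ k1 k2 : ℕ, Matrix (Fin (hermiteDim d (d + 2*k1))) (Fin (hermiteDim d (d + 2*k2))) ℂ :=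
    fun k1 k2 => Matrix.of fun i i' => B ⟨k1, i⟩ ⟨k2, i'⟩ with hBmat
  set Q : ℕ → Matrix (Fin (hermiteDim d (d + 2*k))) (Fin (hermiteDim d (d + 2*k'))) ℂ :=
    fun k'' => Amat k k'' * Bmat k'' k' with hQ
  have hQle : ∀ k'', ‖Q k''‖ ≤ blockNorm d A k k'' * blockNorm d B k'' k' := by
    intro k''
    exact Matrix.l2_opNorm_mul _ _
  have hQns : Summable (fun k'' => ‖Q k''‖) :=
    Summable.of_nonneg_of_le (fun _ => norm_nonneg _) hQle hF
  have hQsum : Summable Q := hQns.of_norm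
  set P : Matrix (Fin (hermiteDim d (d + 2*k))) (Fin (hermiteDim d (d + 2*k'))) ℂ :=
    Matrix.of fun i i' => ∑' b : IndexE d, A ⟨k, i⟩ b * B b ⟨k', i'⟩ with hP
  have hgoal : blockNorm d (fun a c => ∑' b : IndexE d, A a b * B b c) k k' = ‖P‖ := rfl
  have hPQ : P = ∑' k'', Q k'' := by
    ext i i'
    have hf : Summable (fun b : IndexE d => A ⟨k, i⟩ b * B b ⟨k', i'⟩) :=
      (hsum ⟨k, i⟩ ⟨k', i'⟩).of_norm
    have hLHS : P i i' = ∑' k'', Q k'' i i' := by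
      show (∑' b : IndexE d, A ⟨k, i⟩ b * B b ⟨k', i'⟩) = _
      rw [Summable.tsum_sigma hf]
      refine tsum_congr fun k'' => ?_
      rw [tsum_fintype]
      rw [hQ]
      simp only [Matrix.mul_apply]
      rfl
    have hRHS : (∑' k'', Q k'') i i' = ∑' k'', Q k'' i i' := by
      let L : Matrix (Fin (hermiteDim d (d + 2*k))) (Fin (hermiteDim d (d + 2*k'))) ℂ →ₗ[ℂ] ℂ :=
        { toFun := fun X => X i i'
          map_add' := fun _ _ => rfl
          map_smul' := fun _ _ => rfl }
      exact ContinuousLinearMap.map_tsum ⟨L, L.continuous_of_finiteDimensional⟩ hQsum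
    rw [hLHS, ← hRHS]
  rw [hgoal, hPQ]
  exact (norm_tsum_le_tsum_norm hQns).trans (Summable.tsum_le_tsum hQle hQns hF)


end Stmt6Aux

open Stmt6Aux in
theorem stmt6 (d : ℕ) (hd : 1 ≤ d) (β : ℝ) (hβ : 1 / 2 < β) :
    ∃ C > 0, ∀ (A B : IndexE d → IndexE d → ℂ) (MA MB : ℝ),
      (∀ k k', wtBetaPlus d β k k' * blockNorm d A k k' ≤ MA) →
      (∀ k k', wtBetaPlus d β k k' * blockNorm d B k k' ≤ MB) →
      (∀ a c : IndexE d, Summable (fun b : IndexE d => ‖A a b * B b c‖)) ∧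
      (∀ k k', wtBetaPlus d β k k' *
        blockNorm d (fun a c => ∑' b : IndexE d, A a b * B b c) k k' ≤ C * MA * MB) := by

  classical
  have hβ0 : 0 ≤ β := by linarith
  have hp : 1 < 2*β := by linarith
  have hH1 : 1 ≤ ∑' n, haux (2*β) n := one_le_tsum_haux hp
  refine ⟨6 * ∑' n, haux (2*β) n, by linarith, ?_⟩
  intro A B MA MB hA hB
  have hbn0 : ∀ (X : IndexE d → IndexE d → ℂ) k k', 0 ≤ blockNorm d X k k' :=
    fun X k k' => norm_nonneg _
  have hW1 : ∀ k k', 1 ≤ wtBetaPlus d β k k' := fun k k' => wt_one_le hd hβ0 k k'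
  have hW0 : ∀ k k', 0 ≤ wtBetaPlus d β k k' := fun k k' => le_trans zero_le_one (hW1 k k')
  have hMA0 : 0 ≤ MA :=
    le_trans (mul_nonneg (hW0 0 0) (hbn0 A 0 0)) (hA 0 0)
  have hMB0 : 0 ≤ MB :=
    le_trans (mul_nonneg (hW0 0 0) (hbn0 B 0 0)) (hB 0 0)
  set G : ℕ → ℕ → ℕ → ℝ := fun k k' k'' =>
    (haux (2*β) (Nat.dist k'' k) + haux (2*β) k'')
      + (haux (2*β) (Nat.dist k'' k') + haux (2*β) k'') with hGdef
  have hG0 : ∀ k k' k'', 0 ≤ G k k' k'' := by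
    intro k k' k''
    have h1 := haux_pos (2*β) (Nat.dist k'' k)
    have h2 := haux_pos (2*β) k''
    have h3 := haux_pos (2*β) (Nat.dist k'' k')
    simp only [hGdef]; linarith
  have hGsum : ∀ k k', Summable (G k k') := by
    intro k k'
    exact ((summable_haux_dist hp k).add (haux_summable hp)).add
      ((summable_haux_dist hp k').add (haux_summable hp))
  have hGtsum : ∀ k k', ∑' k'', G k k' k'' ≤ 6 * ∑' n, haux (2*β) n := by
    intro k k'
    have s1 := summable_haux_dist hp k
    have s2 := haux_summable (p := 2*β) hp
    have s3 := summable_haux_dist hp k'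
    have e1 := tsum_haux_dist_le hp k
    have e3 := tsum_haux_dist_le hp k'
    simp only [hGdef]
    rw [Summable.tsum_add (s1.add s2) (s3.add s2), Summable.tsum_add s1 s2, Summable.tsum_add s3 s2]
    linarith
  have hkey : ∀ k k' k'', wtBetaPlus d β k k' * (blockNorm d A k k'' * blockNorm d B k'' k')
      ≤ G k k' k'' * (MA * MB) := by
    intro k k' k''
    have hr := wt_ratio hd hβ0 k k' k''
    calc wtBetaPlus d β k k' * (blockNorm d A k k'' * blockNorm d B k'' k')
        ≤ (G k k' k'' * (wtBetaPlus d β k k'' * wtBetaPlus d β k'' k')) *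
            (blockNorm d A k k'' * blockNorm d B k'' k') :=
          mul_le_mul_of_nonneg_right hr (mul_nonneg (hbn0 A k k'') (hbn0 B k'' k'))
      _ = G k k' k'' * ((wtBetaPlus d β k k'' * blockNorm d A k k'') *
            (wtBetaPlus d β k'' k' * blockNorm d B k'' k')) := by ring
      _ ≤ G k k' k'' * (MA * MB) := by
          refine mul_le_mul_of_nonneg_left ?_ (hG0 k k' k'')
          exact mul_le_mul (hA k k'') (hB k'' k')
            (mul_nonneg (hW0 k'' k') (hbn0 B k'' k')) hMA0
  have hF : ∀ k k', Summable (fun k'' => blockNorm d A k k'' * blockNorm d B k'' k') := by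
    intro k k'
    refine Summable.of_nonneg_of_le
      (fun k'' => mul_nonneg (hbn0 A k k'') (hbn0 B k'' k')) (fun k'' => ?_)
      ((hGsum k k').mul_right (MA*MB))
    calc blockNorm d A k k'' * blockNorm d B k'' k'
        ≤ wtBetaPlus d β k k' * (blockNorm d A k k'' * blockNorm d B k'' k') :=
          le_mul_of_one_le_left (mul_nonneg (hbn0 A k k'') (hbn0 B k'' k')) (hW1 k k')
      _ ≤ G k k' k'' * (MA * MB) := hkey k k' k''
  have hsum1 : ∀ a c : IndexE d, Summable fun b : IndexE d => ‖A a b * B b c‖ := by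
    rintro ⟨k, i⟩ ⟨k', i'⟩
    refine (summable_sigma_of_nonneg fun _ => norm_nonneg _).2 ⟨fun k'' => ?_, ?_⟩
    · exact (hasSum_fintype _).summable
    · refine Summable.of_nonneg_of_le (fun k'' => tsum_nonneg fun _ => norm_nonneg _)
        (fun k'' => ?_) (hF k k')
      rw [tsum_fintype]
      exact fiber_sum_le d A B k k' k'' i i'
  refine ⟨hsum1, ?_⟩
  intro k k'
  have hprod := block_prod_le d A B k k' hsum1 (hF k k')
  calc wtBetaPlus d β k k' * blockNorm d (fun a c => ∑' b : IndexE d, A a b * B b c) k k'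
      ≤ wtBetaPlus d β k k' * ∑' k'', blockNorm d A k k'' * blockNorm d B k'' k' :=
        mul_le_mul_of_nonneg_left hprod (hW0 k k')
    _ = ∑' k'', wtBetaPlus d β k k' * (blockNorm d A k k'' * blockNorm d B k'' k') :=
        tsum_mul_left.symm
    _ ≤ ∑' k'', G k k' k'' * (MA * MB) :=
        Summable.tsum_le_tsum (fun k'' => hkey k k' k'') ((hF k k').mul_left _)
          ((hGsum k k').mul_right _)
    _ = (∑' k'', G k k' k'') * (MA * MB) := tsum_mul_right
    _ ≤ (6 * ∑' n, haux (2*β) n) * (MA * MB) :=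
        mul_le_mul_of_nonneg_right (hGtsum k k') (mul_nonneg hMA0 hMB0)
    _ = 6 * (∑' n, haux (2*β) n) * MA * MB := by ring
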